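/- Let G be a simple graph on a finite vertex set and let NM(G) = A·L be its neighbourhood matrix. If i and j are distinct vertices with NM(G)[i,j] = 0, then every walk in G from i to j has length at least 3 (in particular the distance between i and j, if they are connected, is at least 3). -/

import Mathlib

open SimpleGraph Matrix Finset

theorem nm_zero_entry_dist_ge_three {V : Type*} [Fintype V] [DecidableEq V]
    (G : SimpleGraph V) [DecidableRel G.Adj] (i j : V) (hne : i ≠ j)
    (h : (G.adjMatrix ℤ * G.lapMatrix ℤ) i j = 0) :
    ∀ w : G.Walk i j, 3 ≤ w.length := by
  have hentry : (G.adjMatrix ℤ * G.lapMatrix ℤ) i j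
      = (G.adjMatrix ℤ) i j * G.degree j - ∑ k ∈ G.neighborFinset i, (G.adjMatrix ℤ) k j := by
    rw [lapMatrix, mul_sub, Matrix.sub_apply, adjMatrix_mul_apply, adjMatrix_mul_apply]
    congr 1
    by_cases hij : G.Adj i j <;>
      simp [degMatrix, diagonal, Finset.sum_ite_eq, mem_neighborFinset, hij]
  rw [hentry] at h
  have hsum : ∑ k ∈ G.neighborFinset i, (G.adjMatrix ℤ) k j
      = (((G.neighborFinset i).filter (fun k => G.Adj k j)).card : ℤ) := by
    rw [Finset.card_filter]
    push_cast
    apply Finset.sum_congr rfl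
    intro k _
    by_cases hk : G.Adj k j <;> simp [hk]
  rw [hsum] at h
  -- not adjacent
  have hnadj : ¬ G.Adj i j := by
    intro hadj
    have h1 : (G.adjMatrix ℤ) i j = 1 := by simp [hadj]
    rw [h1, one_mul, sub_eq_zero] at h
    have heq : G.degree j = ((G.neighborFinset i).filter (fun k => G.Adj k j)).card :=
      Nat.cast_injective h
    have hji : i ∈ G.neighborFinset j := by rw [mem_neighborFinset]; exact hadj.symm
    have hsub : (G.neighborFinset i).filter (fun k => G.Adj k j) ⊆
        (G.neighborFinset j).erase i := by
      intro k hk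
      simp only [Finset.mem_filter, mem_neighborFinset] at hk
      rw [Finset.mem_erase, mem_neighborFinset]
      exact ⟨fun hki => G.irrefl (hki ▸ hk.1), hk.2.symm⟩
    have hcard := Finset.card_le_card hsub
    rw [Finset.card_erase_of_mem hji, card_neighborFinset_eq_degree] at hcard
    have hdeg : 1 ≤ G.degree j := by
      have : 0 < (G.neighborFinset j).card := Finset.card_pos.mpr ⟨i, hji⟩
      rwa [card_neighborFinset_eq_degree] at this
    omega
  -- no common neighbor
  have hcom : ∀ k, ¬ (G.Adj i k ∧ G.Adj k j) := by
    have h0 : (G.adjMatrix ℤ) i j = 0 := by simp [hnadj]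
    rw [h0, zero_mul, zero_sub, neg_eq_zero, Nat.cast_eq_zero, Finset.card_eq_zero] at h
    intro k ⟨h1, h2⟩
    have : k ∈ (G.neighborFinset i).filter (fun k => G.Adj k j) := by
      simp [mem_neighborFinset, h1, h2]
    rw [h] at this
    exact absurd this (Finset.notMem_empty k)
  intro w
  match w with
  | SimpleGraph.Walk.nil => exact absurd rfl hne
  | SimpleGraph.Walk.cons h1 SimpleGraph.Walk.nil => exact absurd h1 hnadj
  | SimpleGraph.Walk.cons h1 (SimpleGraph.Walk.cons h2 SimpleGraph.Walk.nil) =>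
      exact absurd ⟨h1, h2⟩ (hcom _)
  | SimpleGraph.Walk.cons _ (SimpleGraph.Walk.cons _ (SimpleGraph.Walk.cons _ p)) =>
      simp [SimpleGraph.Walk.length_cons]
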